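/- For p > 2, c_p := ∫_0^1 (1 + s^{(p−2)/p})^{−2p/(p−2)} ds equals 2^{−2p/(p−2)} √π · Γ(x + 1/2)/Γ(x) where x = 1/2 + p/(p−2). -/

import Mathlib

open Real Set

lemma real_beta_aux {u v : ℝ} (hu : 0 < u) (hv : 0 < v) :
    ∫ x in (0:ℝ)..1, x ^ (u - 1) * (1 - x) ^ (v - 1)
      = Real.Gamma u * Real.Gamma v / Real.Gamma (u + v) := by
  have h := Complex.Gamma_mul_Gamma_eq_betaIntegral (s := (u:ℂ)) (t := (v:ℂ))
    (by simpa using hu) (by simpa using hv)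
  have hbeta : Complex.betaIntegral (u:ℂ) (v:ℂ)
      = ((∫ x in (0:ℝ)..1, x ^ (u - 1) * (1 - x) ^ (v - 1) : ℝ) : ℂ) := by
    rw [Complex.betaIntegral, ← intervalIntegral.integral_ofReal]
    refine intervalIntegral.integral_congr fun x hx => ?_
    rw [uIcc_of_le (by norm_num : (0:ℝ) ≤ 1)] at hx
    push_cast
    rw [Complex.ofReal_cpow hx.1, Complex.ofReal_cpow (by linarith [hx.2] : (0:ℝ) ≤ 1 - x)]
    push_cast
    ring
  rw [hbeta, ← Complex.ofReal_add, Complex.Gamma_ofReal, Complex.Gamma_ofReal,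
    Complex.Gamma_ofReal, ← Complex.ofReal_mul, ← Complex.ofReal_mul] at h
  have h2 := Complex.ofReal_inj.mp h
  have hne : Real.Gamma (u + v) ≠ 0 :=
    (Real.Gamma_pos_of_pos (by linarith)).ne'
  rw [eq_div_iff hne]
  linear_combination -h2


/-- For `p > 2`, `c_p = ∫_0^1 (1+s^{(p-2)/p})^{-2p/(p-2)} ds
  = 2^{-2p/(p-2)} √π Γ(x+1/2)/Γ(x)` with `x = 1/2 + p/(p-2)`. -/
theorem stmt_7 (p : ℝ) (hp : 2 < p) :
    ∫ s in (0 : ℝ)..1, (1 + s ^ ((p - 2) / p)) ^ (-(2 * p) / (p - 2))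
      = (2 : ℝ) ^ (-(2 * p) / (p - 2)) * Real.sqrt π *
        Real.Gamma ((1 / 2 + p / (p - 2)) + 1 / 2) / Real.Gamma (1 / 2 + p / (p - 2)) := by
  have hp2 : (0:ℝ) < p - 2 := by linarith
  have hp0 : (0:ℝ) < p := by linarith
  obtain ⟨c, hc⟩ : ∃ c : ℝ, c = p / (p - 2) := ⟨_, rfl⟩
  have hc1 : 1 < c := by rw [hc, lt_div_iff₀ hp2]; linarith
  have hc0 : 0 < c := lt_trans one_pos hc1
  have hcne : c ≠ 0 := hc0.ne'
  have e1 : (p - 2) / p = c⁻¹ := by rw [hc, inv_div]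
  have e2 : -(2 * p) / (p - 2) = -(2 * c) := by rw [hc]; ring
  have e3 : (1 / 2 + p / (p - 2)) + 1 / 2 = c + 1 := by rw [hc]; ring
  have e4 : 1 / 2 + p / (p - 2) = c + 1 / 2 := by rw [hc]; ring
  rw [e3, e4]
  simp only [e1, e2]
  -- the substitution s = (w/(1-w))^c
  have key : ∀ w ∈ uIcc (0:ℝ) (1/2), HasDerivAt (fun w : ℝ => (w / (1 - w)) ^ c)
      ((1 * (1 - w) - w * (-1)) / (1 - w) ^ 2 * c * (w / (1 - w)) ^ (c - 1)) w := by
    intro w hw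
    rw [uIcc_of_le (by norm_num : (0:ℝ) ≤ 1/2)] at hw
    have hw1 : (0:ℝ) < 1 - w := by have := hw.2; linarith
    have hdiv : HasDerivAt (fun w : ℝ => w / (1 - w))
        ((1 * (1 - w) - w * (-1)) / (1 - w) ^ 2) w :=
      (hasDerivAt_id w).div ((hasDerivAt_id w).const_sub 1) hw1.ne'
    exact hdiv.rpow_const (Or.inr hc1.le)
  have hf'cont : ContinuousOn (fun w : ℝ =>
      (1 * (1 - w) - w * (-1)) / (1 - w) ^ 2 * c * (w / (1 - w)) ^ (c - 1))
      (uIcc (0:ℝ) (1/2)) := by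
    rw [uIcc_of_le (by norm_num : (0:ℝ) ≤ 1/2)]
    have h1w : ∀ w ∈ Icc (0:ℝ) (1/2), (1 - w) ≠ 0 := by
      intro w hw; have := hw.2; intro h; rw [sub_eq_zero] at h; linarith
    refine ContinuousOn.mul (ContinuousOn.mul ?_ continuousOn_const) ?_
    · exact ContinuousOn.div (by fun_prop) (by fun_prop)
        (fun w hw => pow_ne_zero 2 (h1w w hw))
    · refine ContinuousOn.rpow_const (ContinuousOn.div (by fun_prop) (by fun_prop) h1w)
        (fun w hw => Or.inr (by linarith [hc1]))
  have himg : ContinuousOn (fun s : ℝ => (1 + s ^ c⁻¹) ^ (-(2 * c)))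
      ((fun w : ℝ => (w / (1 - w)) ^ c) '' (uIcc (0:ℝ) (1/2))) := by
    refine ContinuousOn.mono (s := Icc (0:ℝ) 1) ?_ ?_
    · refine ContinuousOn.rpow_const ?_ (fun s hs => Or.inl ?_)
      · exact (continuousOn_const.add (ContinuousOn.rpow_const continuousOn_id
          (fun s hs => Or.inr (by positivity))))
      · have : (0:ℝ) ≤ s ^ c⁻¹ := Real.rpow_nonneg hs.1 _
        intro h; rw [← h] at this; linarith [this]
    · rintro _ ⟨w, hw, rfl⟩
      rw [uIcc_of_le (by norm_num : (0:ℝ) ≤ 1/2)] at hw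
      have hw1 : (0:ℝ) < 1 - w := by have := hw.2; linarith
      constructor
      · exact Real.rpow_nonneg (div_nonneg hw.1 hw1.le) _
      · apply Real.rpow_le_one (div_nonneg hw.1 hw1.le) _ hc0.le
        rw [div_le_one hw1]; linarith [hw.2]
  have hsub := intervalIntegral.integral_comp_smul_deriv' key hf'cont himg
  rw [show ((0:ℝ) / (1 - 0)) ^ c = 0 from by norm_num [Real.zero_rpow hcne],
    show ((1/2:ℝ) / (1 - 1/2)) ^ c = 1 from by norm_num] at hsub
  have hcong : (∫ w in (0:ℝ)..(1/2),
      ((1 * (1 - w) - w * (-1)) / (1 - w) ^ 2 * c * (w / (1 - w)) ^ (c - 1)) •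
        ((fun s : ℝ => (1 + s ^ c⁻¹) ^ (-(2 * c))) ∘ fun w : ℝ => (w / (1 - w)) ^ c) w)
      = ∫ w in (0:ℝ)..(1/2), c * (w ^ (c - 1) * (1 - w) ^ (c - 1)) := by
    refine intervalIntegral.integral_congr fun w hw => ?_
    rw [uIcc_of_le (by norm_num : (0:ℝ) ≤ 1/2)] at hw
    have hw1 : (0:ℝ) < 1 - w := by have := hw.2; linarith
    have hq0 : (0:ℝ) ≤ w / (1 - w) := div_nonneg hw.1 hw1.le
    simp only [Function.comp, smul_eq_mul]
    rw [Real.rpow_rpow_inv hq0 hcne]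
    rw [show 1 + w / (1 - w) = (1 - w)⁻¹ from by field_simp; ring]
    rw [Real.inv_rpow hw1.le, Real.rpow_neg hw1.le, inv_inv]
    rw [Real.div_rpow hw.1 hw1.le]
    rw [show ((1 - w):ℝ) ^ (2 * c)
        = (1 - w) ^ (c - 1) * ((1 - w) ^ (c - 1) * (1 - w) ^ 2) from by
      rw [← Real.rpow_natCast (1 - w) 2, ← Real.rpow_add hw1, ← Real.rpow_add hw1]
      congr 1
      push_cast
      ring]
    have hne1 : ((1 - w):ℝ) ^ (c - 1) ≠ 0 := (Real.rpow_pos_of_pos hw1 _).ne'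
    field_simp
    ring
  rw [hcong] at hsub
  rw [← hsub, intervalIntegral.integral_const_mul]
  have hBcont : Continuous fun w : ℝ => w ^ (c - 1) * (1 - w) ^ (c - 1) := by
    have h1 : Continuous fun w : ℝ => w ^ (c - 1) :=
      Real.continuous_rpow_const (by linarith)
    exact h1.mul (h1.comp (continuous_const.sub continuous_id))
  have hsym : ∫ w in (1/2:ℝ)..1, w ^ (c - 1) * (1 - w) ^ (c - 1)
      = ∫ w in (0:ℝ)..(1/2), w ^ (c - 1) * (1 - w) ^ (c - 1) := by
    have h := intervalIntegral.integral_comp_sub_left (a := 0) (b := 1/2)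
      (fun w : ℝ => w ^ (c - 1) * (1 - w) ^ (c - 1)) 1
    norm_num at h
    rw [← h]
    refine intervalIntegral.integral_congr fun w hw => ?_
    ring
  have hsplit2 : ∫ w in (0:ℝ)..1, w ^ (c - 1) * (1 - w) ^ (c - 1)
      = 2 * ∫ w in (0:ℝ)..(1/2), w ^ (c - 1) * (1 - w) ^ (c - 1) := by
    rw [← intervalIntegral.integral_add_adjacent_intervals (a := 0) (b := 1/2) (c := 1)
      (hBcont.intervalIntegrable _ _) (hBcont.intervalIntegrable _ _), hsym]
    ring
  have hbeta := real_beta_aux hc0 hc0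
  have hhalf : ∫ w in (0:ℝ)..(1/2), w ^ (c - 1) * (1 - w) ^ (c - 1)
      = Real.Gamma c * Real.Gamma c / Real.Gamma (2 * c) / 2 := by
    rw [hbeta, show c + c = 2 * c from by ring] at hsplit2
    linarith
  rw [hhalf]
  have hdup := Real.Gamma_mul_Gamma_add_half c
  have h2 : (2:ℝ) ^ (1 - 2 * c) = 2 * 2 ^ (-(2 * c)) := by
    rw [show (1 - 2 * c) = 1 + (-(2 * c)) from by ring, Real.rpow_add two_pos, Real.rpow_one]
  rw [h2] at hdup
  have hG2c : (0:ℝ) < Real.Gamma (2 * c) := Real.Gamma_pos_of_pos (by linarith)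
  have hGch : (0:ℝ) < Real.Gamma (c + 1/2) := Real.Gamma_pos_of_pos (by linarith)
  have hGc : (0:ℝ) < Real.Gamma c := Real.Gamma_pos_of_pos hc0
  rw [Real.Gamma_add_one hcne]
  set G1 := Real.Gamma c with hG1
  set G2 := Real.Gamma (c + 1/2) with hG2d
  set G3 := Real.Gamma (2 * c) with hG3
  set T := (2:ℝ) ^ (-(2 * c)) with hT
  field_simp
  linear_combination hdup
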